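/- Let (𝔫, μ, ⟨·,·⟩) be a metric nilpotent Lie algebra with μ ≠ 0, whose inner product is compatible with a pre-Einstein derivation φ_μ, and let B = {e_i} be an orthonormal basis of eigenvectors of φ_μ with (id − φ_μ)e_i = s_i·e_i. Then: (a) s_i + s_j − s_k = 1 for all 1 ≤ i < j ≤ n and 1 ≤ k ≤ n with μ^k_{ij} ≠ 0; (b) Σ_{l=1}^n s_l² > 0, the orthogonal projection P₀ of the origin of 𝔫 onto the affine span L_B of F_B equals (Σ_{i=1}^n s_i e_i)/(Σ_{l=1}^n s_l²), and consequently ‖P₀‖² = 1/(Σ_{l=1}^n s_l²) ≠ 0. -/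

import Mathlib

open scoped BigOperators RealInnerProductSpace

noncomputable section

variable {E : Type*} [NormedAddCommGroup E] [InnerProductSpace ℝ E] [FiniteDimensional ℝ E]

/-- `μ` is a Lie bracket: alternating and satisfying the Jacobi identity. -/
def IsLieBracket (μ : E →ₗ[ℝ] E →ₗ[ℝ] E) : Prop :=
  (∀ X, μ X X = 0) ∧ ∀ X Y Z, μ X (μ Y Z) + μ Y (μ Z X) + μ Z (μ X Y) = 0

/-- `D` is a derivation of the bracket `μ`. -/
def IsDerivation (μ : E →ₗ[ℝ] E →ₗ[ℝ] E) (D : E →ₗ[ℝ] E) : Prop :=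
  ∀ X Y, D (μ X Y) = μ (D X) Y + μ X (D Y)

/-- The bracket `μ` is nilpotent: all sufficiently long iterated brackets vanish. -/
def IsNilpotentBracket (μ : E →ₗ[ℝ] E →ₗ[ℝ] E) : Prop :=
  ∃ k : ℕ, ∀ x : ℕ → E, (List.range k).foldr (fun i v => μ (x i) v) (x k) = 0

/-- `φ` is a pre-Einstein derivation of `μ`: a derivation, diagonalizable over `ℝ`,
with `tr(φ∘ψ) = tr(ψ)` for every derivation `ψ` of `μ`. -/
def IsPreEinstein (μ : E →ₗ[ℝ] E →ₗ[ℝ] E) (φ : E →ₗ[ℝ] E) : Prop :=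
  IsDerivation μ φ ∧
  (∃ b : Module.Basis (Fin (Module.finrank ℝ E)) ℝ E, ∀ i, ∃ c : ℝ, φ (b i) = c • b i) ∧
  ∀ ψ : E →ₗ[ℝ] E, IsDerivation μ ψ →
    LinearMap.trace ℝ E (φ ∘ₗ ψ) = LinearMap.trace ℝ E ψ

/-- The finite subset `F_B = { e_i + e_j - e_k : i < j, μ^k_{ij} ≠ 0 }` of `E`. -/
def FB {n : ℕ} (b : OrthonormalBasis (Fin n) ℝ E) (μ : E →ₗ[ℝ] E →ₗ[ℝ] E) : Set E :=
  {x : E | ∃ i j k : Fin n, i < j ∧ ⟪μ (b i) (b j), b k⟫ ≠ 0 ∧ x = b i + b j - b k}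

/-- Trace of a linear map that is diagonal in an orthonormal basis. -/
lemma trace_of_diag {n : ℕ} (b : OrthonormalBasis (Fin n) ℝ E)
    (T : E →ₗ[ℝ] E) (c : Fin n → ℝ) (h : ∀ i, T (b i) = c i • b i) :
    LinearMap.trace ℝ E T = ∑ i, c i := by
  classical
  rw [LinearMap.trace_eq_matrix_trace ℝ b.toBasis, Matrix.trace]
  refine Finset.sum_congr rfl fun i _ => ?_
  have hb : b.toBasis i = b i := by rw [OrthonormalBasis.coe_toBasis]
  simp only [Matrix.diag_apply, LinearMap.toMatrix_apply, hb, h i, map_smul,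
    Finsupp.smul_apply]
  have : b.toBasis.repr (b i) = Finsupp.single i 1 := by rw [← hb]; exact b.toBasis.repr_self i
  rw [this]; simp

theorem structure_constants_and_projection {n : ℕ} (hn : 1 ≤ n)
    (μ : E →ₗ[ℝ] E →ₗ[ℝ] E) (hμ : IsLieBracket μ) (hnil : IsNilpotentBracket μ)
    (hne : μ ≠ 0) (φ : E →ₗ[ℝ] E) (hφ : IsPreEinstein μ φ) (hcompat : φ.IsSymmetric)
    (b : OrthonormalBasis (Fin n) ℝ E) (s : Fin n → ℝ)
    (hb : ∀ i, (LinearMap.id - φ : E →ₗ[ℝ] E) (b i) = s i • b i)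
    (P₀ : E) (hP₀ : P₀ ∈ affineSpan ℝ (FB b μ))
    (hP₀' : ∀ w ∈ affineSpan ℝ (FB b μ), ⟪P₀, w - P₀⟫ = 0) :
    (∀ i j k : Fin n, i < j → ⟪μ (b i) (b j), b k⟫ ≠ 0 → s i + s j - s k = 1) ∧
    0 < ∑ i, s i ^ 2 ∧
    P₀ = (∑ i, s i ^ 2)⁻¹ • ∑ i, s i • b i ∧
    ‖P₀‖ ^ 2 = (∑ i, s i ^ 2)⁻¹ := by
  classical
  obtain ⟨hder, hdiag, htr⟩ := hφ
  have hφb : ∀ i, φ (b i) = (1 - s i) • b i := by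
    intro i
    have h := hb i
    simp only [LinearMap.sub_apply, LinearMap.id_apply] at h
    rw [sub_smul, one_smul, ← h]
    abel
  -- part (a), without needing i < j
  have ha : ∀ i j k : Fin n, ⟪μ (b i) (b j), b k⟫ ≠ 0 → s i + s j - s k = 1 := by
    intro i j k hc
    have h1 : φ (μ (b i) (b j)) = ((1 - s i) + (1 - s j)) • μ (b i) (b j) := by
      rw [hder (b i) (b j), hφb i, hφb j, map_smul, map_smul, LinearMap.smul_apply, add_smul]
    have h2 : ⟪φ (μ (b i) (b j)), b k⟫ = (1 - s k) * ⟪μ (b i) (b j), b k⟫ := by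
      rw [hcompat (μ (b i) (b j)) (b k), hφb k, real_inner_smul_right]
    rw [h1, real_inner_smul_left] at h2
    have := mul_right_cancel₀ hc h2
    linarith
  -- antisymmetry of the bracket
  have hanti : ∀ X Y : E, μ Y X = - μ X Y := by
    intro X Y
    have h0 := hμ.1 (X + Y)
    simp only [map_add, LinearMap.add_apply, hμ.1 X, hμ.1 Y, zero_add, add_zero] at h0
    exact add_eq_zero_iff_eq_neg.mp h0
  -- orthonormality values
  have hob : ∀ i j : Fin n, ⟪b i, b j⟫ = if i = j then (1:ℝ) else 0 :=
    orthonormal_iff_ite.mp b.orthonormal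
  -- F_B is nonempty
  have hex : ∃ i j k : Fin n, i < j ∧ ⟪μ (b i) (b j), b k⟫ ≠ 0 := by
    by_contra hcon
    push_neg at hcon
    apply hne
    have key : ∀ i j : Fin n, i < j → μ (b i) (b j) = 0 := by
      intro i j hij
      rw [← b.sum_repr' (μ (b i) (b j))]
      refine Finset.sum_eq_zero fun k _ => ?_
      have : ⟪μ (b i) (b j), b k⟫ = 0 := hcon i j k hij
      rw [real_inner_comm] at this
      rw [this, zero_smul]
    refine LinearMap.ext_basis b.toBasis b.toBasis fun i j => ?_
    simp only [OrthonormalBasis.coe_toBasis, LinearMap.zero_apply]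
    rcases lt_trichotomy i j with h | h | h
    · exact key i j h
    · rw [h]; exact hμ.1 _
    · rw [hanti (b j) (b i), key j i h, neg_zero]
  obtain ⟨i₀, j₀, k₀, hij₀, hc₀⟩ := hex
  set x₀ : E := b i₀ + b j₀ - b k₀ with hx₀def
  have hx₀mem : x₀ ∈ FB b μ := ⟨i₀, j₀, k₀, hij₀, hc₀, rfl⟩
  set v : E := ∑ i, s i • b i with hvdef
  have hvb : ∀ l, ⟪v, b l⟫ = s l := by
    intro l
    rw [hvdef, sum_inner]
    rw [Finset.sum_eq_single l]
    · rw [real_inner_smul_left, hob l l]; simp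
    · intro i _ hil
      rw [real_inner_smul_left, hob i l, if_neg hil, mul_zero]
    · intro h; exact absurd (Finset.mem_univ l) h
  have hvF : ∀ x ∈ FB b μ, ⟪v, x⟫ = 1 := by
    rintro x ⟨i, j, k, hij, hc, rfl⟩
    rw [inner_sub_right, inner_add_right, hvb, hvb, hvb]
    exact ha i j k hc
  have hvD : ∀ z ∈ vectorSpan ℝ (FB b μ), ⟪v, z⟫ = 0 := by
    intro z hz
    rw [vectorSpan_def] at hz
    induction hz using Submodule.span_induction with
    | mem x hx =>
      obtain ⟨p, hp, q, hq, rfl⟩ := hx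
      show ⟪v, p - q⟫ = 0
      rw [inner_sub_right, hvF p hp, hvF q hq, sub_self]
    | zero => rw [inner_zero_right]
    | add x y _ _ hx hy => rw [inner_add_right, hx, hy, add_zero]
    | smul c x _ hx => rw [real_inner_smul_right, hx, mul_zero]
  have hP₀D : ∀ z ∈ vectorSpan ℝ (FB b μ), ⟪P₀, z⟫ = 0 := by
    intro z hz
    have hz' : z ∈ (affineSpan ℝ (FB b μ)).direction := by
      rw [direction_affineSpan]; exact hz
    have hw : z +ᵥ P₀ ∈ affineSpan ℝ (FB b μ) :=
      AffineSubspace.vadd_mem_of_mem_direction hz' hP₀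
    have h := hP₀' _ hw
    simpa [vadd_eq_add, add_sub_cancel_right] using h
  have hx₀span : x₀ ∈ affineSpan ℝ (FB b μ) := subset_affineSpan ℝ _ hx₀mem
  have hPx₀ : P₀ - x₀ ∈ vectorSpan ℝ (FB b μ) := by
    have h := AffineSubspace.vsub_mem_direction hP₀ hx₀span
    rw [direction_affineSpan] at h
    exact h
  have hvP₀ : ⟪v, P₀⟫ = 1 := by
    have h1 : ⟪v, P₀ - x₀⟫ = 0 := hvD _ hPx₀
    rw [inner_sub_right, hvF x₀ hx₀mem] at h1
    linarith
  have hvv : ⟪v, v⟫ = ∑ i, s i ^ 2 := by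
    nth_rewrite 2 [hvdef]
    rw [inner_sum]
    refine Finset.sum_congr rfl fun i _ => ?_
    rw [real_inner_smul_right, hvb i]; ring
  have hvne : v ≠ 0 := by
    intro h
    rw [h, inner_zero_left] at hvP₀
    exact one_ne_zero hvP₀.symm
  have hT : 0 < ∑ i, s i ^ 2 := by
    rw [← hvv]
    exact lt_of_le_of_ne real_inner_self_nonneg (fun h => hvne (inner_self_eq_zero.mp h.symm))
  have hTne : (∑ i, s i ^ 2) ≠ 0 := ne_of_gt hT
  -- v lies in the span of F_B, via pre-Einstein condition
  have hvK : v ∈ Submodule.span ℝ (FB b μ) := by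
    rw [← Submodule.orthogonal_orthogonal (Submodule.span ℝ (FB b μ))]
    rw [Submodule.mem_orthogonal]
    intro u hu
    rw [Submodule.mem_orthogonal] at hu
    have hud : ∀ x ∈ FB b μ, ⟪x, u⟫ = 0 := fun x hx => hu x (Submodule.subset_span hx)
    set d : Fin n → ℝ := fun i => ⟪u, b i⟫ with hddef
    have hdkey0 : ∀ i j k : Fin n, i < j → ⟪μ (b i) (b j), b k⟫ ≠ 0 → d i + d j = d k := by
      intro i j k hij hc
      have h := hud (b i + b j - b k) ⟨i, j, k, hij, hc, rfl⟩
      rw [inner_sub_left, inner_add_left] at h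
      have e : ∀ l : Fin n, ⟪b l, u⟫ = d l := fun l => real_inner_comm u (b l)
      rw [e i, e j, e k] at h
      linarith
    have hdkey : ∀ i j k : Fin n, ⟪μ (b i) (b j), b k⟫ ≠ 0 → d i + d j = d k := by
      intro i j k hc
      rcases lt_trichotomy i j with h | h | h
      · exact hdkey0 i j k h hc
      · exfalso; apply hc; rw [h, hμ.1, inner_zero_left]
      · have hc' : ⟪μ (b j) (b i), b k⟫ ≠ 0 := by
          rw [hanti (b i) (b j)]
          simpa using hc
        have := hdkey0 j i k h hc'
        linarith
    set ψ : E →ₗ[ℝ] E := b.toBasis.constr ℝ (fun i => d i • b i) with hψdef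
    have hψb : ∀ i, ψ (b i) = d i • b i := by
      intro i
      have h := b.toBasis.constr_basis ℝ (fun i => d i • b i) i
      rwa [OrthonormalBasis.coe_toBasis] at h
    have key : ∀ i j : Fin n, ψ (μ (b i) (b j)) = (d i + d j) • μ (b i) (b j) := by
      intro i j
      conv_lhs => rw [← b.sum_repr' (μ (b i) (b j))]
      conv_rhs => rw [← b.sum_repr' (μ (b i) (b j))]
      rw [map_sum, Finset.smul_sum]
      refine Finset.sum_congr rfl fun k _ => ?_
      rw [map_smul, hψb k]
      by_cases h : ⟪b k, μ (b i) (b j)⟫ = 0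
      · simp [h]
      · have h' : ⟪μ (b i) (b j), b k⟫ ≠ 0 := by rwa [real_inner_comm] at h
        rw [smul_smul, smul_smul, hdkey i j k h', mul_comm]
    have hψder : IsDerivation μ ψ := by
      have heq : μ.compr₂ ψ = μ ∘ₗ ψ + μ.compl₂ ψ := by
        refine LinearMap.ext_basis b.toBasis b.toBasis fun i j => ?_
        simp only [LinearMap.compr₂_apply, LinearMap.add_apply, LinearMap.comp_apply,
          LinearMap.compl₂_apply, OrthonormalBasis.coe_toBasis]
        rw [key i j, hψb i, hψb j, map_smul, LinearMap.smul_apply, map_smul, add_smul]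
      intro X Y
      have h2 := LinearMap.congr_fun (LinearMap.congr_fun heq X) Y
      simpa only [LinearMap.compr₂_apply, LinearMap.add_apply, LinearMap.comp_apply,
        LinearMap.compl₂_apply] using h2
    have htrψ : LinearMap.trace ℝ E ψ = ∑ i, d i := trace_of_diag b ψ d hψb
    have htrφψ : LinearMap.trace ℝ E (φ ∘ₗ ψ) = ∑ i, (1 - s i) * d i := by
      refine trace_of_diag b _ _ fun i => ?_
      rw [LinearMap.comp_apply, hψb i, map_smul, hφb i, smul_smul, mul_comm]
    have heq2 := htr ψ hψder
    rw [htrψ, htrφψ] at heq2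
    have hsd : ∑ i, s i * d i = 0 := by
      have h3 : ∑ i, ((1 - s i) * d i) = ∑ i, d i - ∑ i, s i * d i := by
        rw [← Finset.sum_sub_distrib]
        exact Finset.sum_congr rfl fun i _ => by ring
      rw [h3] at heq2
      linarith
    rw [hvdef, inner_sum]
    rw [← hsd]
    exact Finset.sum_congr rfl fun i _ => by rw [real_inner_smul_right]
  -- decompose v along x₀ and the vector span
  have hsub : Submodule.span ℝ (FB b μ) ≤ Submodule.span ℝ {x₀} ⊔ vectorSpan ℝ (FB b μ) := by
    rw [Submodule.span_le]
    intro x hx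
    refine Submodule.mem_sup.2 ⟨x₀, Submodule.mem_span_singleton_self x₀, x - x₀, ?_, by abel⟩
    have h := vsub_mem_vectorSpan ℝ hx hx₀mem
    rwa [vsub_eq_sub] at h
  obtain ⟨y, hy, z, hz, hyz⟩ := Submodule.mem_sup.1 (hsub hvK)
  obtain ⟨c, rfl⟩ := Submodule.mem_span_singleton.1 hy
  have hc : c = ∑ i, s i ^ 2 := by
    have h1 : ⟪v, v⟫ = c * ⟪v, x₀⟫ + ⟪v, z⟫ := by
      nth_rewrite 2 [← hyz]
      rw [inner_add_right, real_inner_smul_right]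
    rw [hvF x₀ hx₀mem, hvD z hz, hvv] at h1
    linarith
  have hTv : (∑ i, s i ^ 2)⁻¹ • v = x₀ + (∑ i, s i ^ 2)⁻¹ • z := by
    rw [← hyz, hc, smul_add, smul_smul, inv_mul_cancel₀ hTne, one_smul]
  have hw1 : P₀ - (∑ i, s i ^ 2)⁻¹ • v ∈ vectorSpan ℝ (FB b μ) := by
    rw [hTv]
    have h : P₀ - (x₀ + (∑ i, s i ^ 2)⁻¹ • z) = (P₀ - x₀) - (∑ i, s i ^ 2)⁻¹ • z := by abel
    rw [h]
    exact Submodule.sub_mem _ hPx₀ (Submodule.smul_mem _ _ hz)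
  have hw2 : ⟪P₀ - (∑ i, s i ^ 2)⁻¹ • v, P₀ - (∑ i, s i ^ 2)⁻¹ • v⟫ = 0 := by
    rw [inner_sub_left, real_inner_smul_left, hP₀D _ hw1, hvD _ hw1]
    ring
  have hPeq : P₀ = (∑ i, s i ^ 2)⁻¹ • v := by
    have h0 : P₀ - (∑ i, s i ^ 2)⁻¹ • v = 0 := inner_self_eq_zero.mp hw2
    rwa [sub_eq_zero] at h0
  have hnorm : ‖P₀‖ ^ 2 = (∑ i, s i ^ 2)⁻¹ := by
    rw [← real_inner_self_eq_norm_sq, hPeq, real_inner_smul_left, real_inner_smul_right, hvv]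
    field_simp
  exact ⟨fun i j k _ hc' => ha i j k hc', hT, hPeq, hnorm⟩

end
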